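/- For every rational function p over ℝ that is proper (i.e., p(∞) = 0, equivalently the degree of the numerator of p is strictly less than the degree of its denominator, with p written in lowest terms), there exist a positive integer n and real matrices A of size n×n, B of size n×1, and C of size 1×n such that for every z ∈ ℂ with det(zI − A) ≠ 0, p(z) equals the unique entry of the 1×1 matrix C(zI − A)⁻¹B. -/

import Mathlib

open Polynomial Matrix

/-- **Realization theory.** Every proper real rational function `p` (the degree of the
numerator is strictly less than the degree of the denominator) is the transfer function
`C (zI - A)⁻¹ B` of some linear system `(A, B, C)`. -/
theorem exists_realization (p : RatFunc ℝ) (hp : p.num.degree < p.denom.degree) :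
    ∃ (n : ℕ), 0 < n ∧ ∃ (A : Matrix (Fin n) (Fin n) ℝ) (B : Matrix (Fin n) (Fin 1) ℝ)
      (C : Matrix (Fin 1) (Fin n) ℝ),
      ∀ z : ℂ, (z • (1 : Matrix (Fin n) (Fin n) ℂ) - A.map Complex.ofReal).det ≠ 0 →
        RatFunc.eval (algebraMap ℝ ℂ) z p =
          (C.map Complex.ofReal * (z • (1 : Matrix (Fin n) (Fin n) ℂ) - A.map Complex.ofReal)⁻¹
            * B.map Complex.ofReal) 0 0 := by
  by_cases hn : p.denom.natDegree = 0
  · -- degenerate case : p = 0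
    have hq : p.denom.degree = 0 := by
      rw [Polynomial.degree_eq_natDegree (RatFunc.denom_ne_zero p), hn]; rfl
    have hnum : p.num = 0 := by
      rw [hq] at hp
      exact Polynomial.degree_eq_bot.mp (Nat.WithBot.lt_zero_iff.mp hp)
    have hp0 : p = 0 := RatFunc.num_eq_zero_iff.mp hnum
    refine ⟨1, one_pos, 0, 0, 0, ?_⟩
    intro z hz
    simp [hp0, RatFunc.eval, Matrix.map_apply, Matrix.mul_apply]
  · set m := p.denom.natDegree with hm
    have hm0 : 0 < m := Nat.pos_of_ne_zero hn
    set A : Matrix (Fin m) (Fin m) ℝ := Matrix.of (fun i j : Fin m =>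
      if (i : ℕ) + 1 = (j : ℕ) then 1
      else if (i : ℕ) = m - 1 then -p.denom.coeff (j : ℕ) else 0) with hA
    set B : Matrix (Fin m) (Fin 1) ℝ := Matrix.of (fun (i : Fin m) (_ : Fin 1) =>
      if (i : ℕ) = m - 1 then (1 : ℝ) else 0) with hB
    set C : Matrix (Fin 1) (Fin m) ℝ := Matrix.of (fun (_ : Fin 1) (j : Fin m) =>
      p.num.coeff (j : ℕ)) with hC
    refine ⟨m, hm0, A, B, C, ?_⟩
    intro z hz
    set M : Matrix (Fin m) (Fin m) ℂ := z • 1 - A.map Complex.ofReal with hMdef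
    have hMunit : IsUnit M.det := isUnit_iff_ne_zero.mpr hz
    set D : ℂ := p.denom.eval₂ (algebraMap ℝ ℂ) z with hD
    set N : ℂ := p.num.eval₂ (algebraMap ℝ ℂ) z with hN
    set v : Fin m → ℂ := fun i => z ^ (i : ℕ) with hv
    set e : Fin m → ℂ := fun i => if (i : ℕ) = m - 1 then 1 else 0 with he
    -- the key vector identity
    have hsumD : D = (∑ j : Fin m, ((p.denom.coeff (j : ℕ) : ℂ)) * z ^ (j : ℕ)) + z ^ m := by
      rw [hD, Polynomial.eval₂_eq_sum_range' (algebraMap ℝ ℂ) (lt_add_one m) z,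
        Finset.sum_range_succ, Fin.sum_univ_eq_sum_range (fun j => ((p.denom.coeff j : ℂ)) * z ^ j)]
      simp [Complex.coe_algebraMap, (RatFunc.monic_denom p).coeff_natDegree, ← hm,
        show p.denom.coeff m = 1 from (RatFunc.monic_denom p).coeff_natDegree]
    have hMv : M *ᵥ v = D • e := by
      funext i
      have hilt : (i : ℕ) < m := i.isLt
      simp only [hMdef, Matrix.mulVec, dotProduct, Matrix.sub_apply, Matrix.smul_apply,
        Matrix.one_apply, Matrix.map_apply, sub_mul, Finset.sum_sub_distrib, smul_eq_mul]
      have h1 : ∑ j : Fin m, (z * if i = j then (1:ℂ) else 0) * v j = z * z ^ (i : ℕ) := by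
        simp [mul_ite, ite_mul, Finset.sum_ite_eq, hv]
      rw [h1]
      by_cases hi : (i : ℕ) = m - 1
      · have h2 : ∑ j : Fin m, (Complex.ofReal (A i j)) * v j
            = -∑ j : Fin m, ((p.denom.coeff (j : ℕ) : ℂ)) * z ^ (j : ℕ) := by
          rw [← Finset.sum_neg_distrib]
          apply Finset.sum_congr rfl
          intro j _
          have hjlt : (j : ℕ) < m := j.isLt
          have hne : ¬ ((i : ℕ) + 1 = (j : ℕ)) := by omega
          simp only [hA, Matrix.of_apply, if_neg hne, if_pos hi, hv, Complex.ofReal_neg,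
            neg_mul]
        rw [h2, hsumD, Pi.smul_apply, he]
        have hz1 : z * z ^ (i : ℕ) = z ^ m := by
          rw [← pow_succ']
          congr 1
          omega
        rw [hz1]
        simp only [hi, ite_true, eq_self_iff_true, smul_eq_mul, mul_one]
        ring
      · have hij : (i : ℕ) + 1 < m := by omega
        have h2 : ∑ j : Fin m, (Complex.ofReal (A i j)) * v j = z * z ^ (i : ℕ) := by
          rw [Finset.sum_eq_single (⟨(i : ℕ) + 1, hij⟩ : Fin m)]
          · simp [hA, hv, pow_succ']
          · intro j _ hj
            have hj' : (j : ℕ) ≠ (i : ℕ) + 1 := by simpa [Fin.ext_iff] using hj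
            have hne : ¬ ((i : ℕ) + 1 = (j : ℕ)) := fun h => hj' h.symm
            simp [hA, hne, hi]
          · simp
        rw [h2, Pi.smul_apply, he]
        simp [hi]
    have hDne : D ≠ 0 := by
      intro hD0
      have h0 : M *ᵥ v = 0 := by rw [hMv, hD0, zero_smul]
      have : v = 0 := by
        have := congrArg (fun w => M⁻¹ *ᵥ w) h0
        simpa [Matrix.mulVec_mulVec, Matrix.nonsing_inv_mul M hMunit] using this
      have := congrFun this ⟨0, hm0⟩
      simp [hv] at this
    have hinv : M⁻¹ *ᵥ e = D⁻¹ • v := by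
      have h1 : M⁻¹ *ᵥ (M *ᵥ v) = v := by
        rw [Matrix.mulVec_mulVec, Matrix.nonsing_inv_mul M hMunit, Matrix.one_mulVec]
      rw [hMv, Matrix.mulVec_smul] at h1
      rw [← h1, smul_smul, inv_mul_cancel₀ hDne, one_smul]
    -- the numerator sum
    have hnd : p.num.natDegree < m := by
      by_cases h0 : p.num = 0
      · simpa [h0] using hm0
      · exact Polynomial.natDegree_lt_natDegree h0 hp
    have hsumN : N = ∑ j : Fin m, ((p.num.coeff (j : ℕ) : ℂ)) * z ^ (j : ℕ) := by
      rw [hN, Polynomial.eval₂_eq_sum_range' (algebraMap ℝ ℂ) hnd z,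
        Fin.sum_univ_eq_sum_range (fun j => ((p.num.coeff j : ℂ)) * z ^ j)]
      simp [Complex.coe_algebraMap]
    -- compute the transfer function
    have hRHS : (C.map Complex.ofReal * M⁻¹ * B.map Complex.ofReal) 0 0 = D⁻¹ * N := by
      rw [Matrix.mul_assoc, Matrix.mul_apply]
      have hcol : ∀ j : Fin m, (M⁻¹ * B.map Complex.ofReal) j 0 = D⁻¹ * v j := by
        intro j
        have : (M⁻¹ * B.map Complex.ofReal) j 0 = (M⁻¹ *ᵥ e) j := by
          rw [Matrix.mul_apply]
          apply Finset.sum_congr rfl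
          intro k _
          simp [hB, he, apply_ite Complex.ofReal]
        rw [this, hinv]; simp
      calc ∑ j : Fin m, (C.map Complex.ofReal) 0 j * (M⁻¹ * B.map Complex.ofReal) j 0
          = ∑ j : Fin m, ((p.num.coeff (j : ℕ) : ℂ)) * (D⁻¹ * v j) := by
            apply Finset.sum_congr rfl; intro j _; rw [hcol]; simp [hC]
        _ = D⁻¹ * ∑ j : Fin m, ((p.num.coeff (j : ℕ) : ℂ)) * z ^ (j : ℕ) := by
            rw [Finset.mul_sum]; apply Finset.sum_congr rfl; intro j _; simp [hv]; ring
        _ = D⁻¹ * N := by rw [hsumN]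
    have heval : RatFunc.eval (algebraMap ℝ ℂ) z p = N / D := rfl
    rw [heval, hRHS, div_eq_mul_inv, mul_comm]
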